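/- Let S be a nonempty set equipped with an associative and commutative Mal'cev operation t. Then there exists a commutative group structure (multiplication, inverse, and unit) on S such that t(x, r, y) = x * r⁻¹ * y for all x, r, y ∈ S. -/
import Mathlib


/-- A nonempty set with an associative and commutative Mal'cev operation `t`
admits a commutative group structure such that `t(x, r, y) = x * r⁻¹ * y`. -/
theorem abelian_heap_is_comm_group {S : Type*} [Nonempty S] (t : S → S → S → S)
    (hl : ∀ x y : S, t x x y = y) (hr : ∀ x y : S, t x y y = x)
    (hassoc : ∀ x r y s z : S, t x r (t y s z) = t (t x r y) s z)
    (hcomm : ∀ x r y : S, t x r y = t y r x) :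
    ∃ inst : CommGroup S, ∀ x r y : S, t x r y =
      (letI := inst; x * r⁻¹ * y) := by
  obtain ⟨e⟩ := ‹Nonempty S›
  refine ⟨{ mul := fun x y => t x e y
            one := e
            inv := fun x => t e x e
            mul_assoc := fun x y z => (hassoc x e y e z).symm
            one_mul := fun x => hl e x
            mul_one := fun x => hr x e
            inv_mul_cancel := fun x => by
              show t (t e x e) e x = e
              rw [← hassoc, hl, hr]
            mul_comm := fun x y => hcomm x e y }, ?_⟩
  intro x r y
  show t x r y = t (t x e (t e r e)) e y
  rw [hassoc x e e r e, hr, ← hassoc, hl]
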